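/- Every topological space embeds in a pseudoradial space. -/

import Mathlib

open Filter Topology Cardinal

universe u

/-- The two points of the Sierpiński space. -/
inductive SPt : Type
  | zero
  | one
deriving DecidableEq

/-- The Sierpiński topology: `{zero}` is open, `{one}` is not. -/
instance : TopologicalSpace SPt := TopologicalSpace.generateFrom {{SPt.zero}}

/-- `A` is closed under limits of `o`-indexed transfinite sequences for all infinite
ordinals `o ≤ β` (β an infinite cardinal, viewed as an ordinal). -/
def OrdSeqClosed {X : Type u} [TopologicalSpace X] (β : Cardinal.{u}) (A : Set X) : Prop :=
  ∀ o : Ordinal.{u}, Ordinal.omega0 ≤ o → o ≤ β.ord →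
    ∀ f : o.ToType → X, (∀ i, f i ∈ A) →
    ∀ x : X, Filter.Tendsto f Filter.atTop (nhds x) → x ∈ A

/-- A space is β-sequential if every such subset is closed. -/
def IsBetaSequential (X : Type u) [TopologicalSpace X] (β : Cardinal.{u}) : Prop :=
  ∀ A : Set X, OrdSeqClosed β A → IsClosed A

/-- `A` contains limits of all convergent transfinite sequences of its points. -/
def TransSeqClosed {X : Type u} [TopologicalSpace X] (A : Set X) : Prop :=
  ∀ o : Ordinal.{u}, Ordinal.omega0 ≤ o →
    ∀ f : o.ToType → X, (∀ i, f i ∈ A) →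
    ∀ x : X, Filter.Tendsto f Filter.atTop (nhds x) → x ∈ A

/-- Pseudoradial space. -/
def IsPseudoradial (X : Type u) [TopologicalSpace X] : Prop :=
  ∀ A : Set X, TransSeqClosed A → IsClosed A

/-! ### Auxiliary construction

We embed `X` into the space `PRSpace X` whose points are pairs (a set of subsets of `X`,
a point of `X`), topologized by the subbasis of "cylinders" `{y | U ∈ y.zs}` for `U` open
in `X`.  This is a (non-T0 version of a) Sierpiński cube, and it is pseudoradial. -/

section PRConstruction

variable {X : Type u} [TopologicalSpace X]

/-- The ambient space: a "Sierpiński cube" indexed by `Set X`, times `X` with no topology. -/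
structure PRSpace (X : Type u) : Type u where
  zs : Set (Set X)
  pt : X

/-- Subbasic open sets: cylinders over open sets of `X`. -/
def prGens (X : Type u) [TopologicalSpace X] : Set (Set (PRSpace X)) :=
  {O | ∃ U : Set X, IsOpen U ∧ O = {y : PRSpace X | U ∈ y.zs}}

instance prTop : TopologicalSpace (PRSpace X) :=
  TopologicalSpace.generateFrom (prGens X)

lemma isOpen_cyl {U : Set X} (hU : IsOpen U) : IsOpen {y : PRSpace X | U ∈ y.zs} :=
  TopologicalSpace.GenerateOpen.basic _ ⟨U, hU, rfl⟩

/-- Every open set containing `z` contains a finite "cylinder" neighborhood of `z`. -/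
lemma prBasis {O : Set (PRSpace X)} (hO : IsOpen O) (z : PRSpace X) :
    z ∈ O → ∃ F : Set (Set X), F.Finite ∧ (∀ U ∈ F, IsOpen U ∧ U ∈ z.zs) ∧
      ∀ y : PRSpace X, (∀ U ∈ F, U ∈ y.zs) → y ∈ O := by
  have hO' : TopologicalSpace.GenerateOpen (prGens X) O := hO
  clear hO
  induction hO' with
  | @basic O hOg =>
    intro hz
    obtain ⟨U, hU, rfl⟩ := hOg
    refine ⟨{U}, Set.finite_singleton U, ?_, fun y hy => hy U rfl⟩
    intro V hV
    rcases hV with rfl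
    exact ⟨hU, hz⟩
  | univ =>
    intro _
    exact ⟨∅, Set.finite_empty, by simp, by simp⟩
  | inter O₁ O₂ h₁ h₂ ih₁ ih₂ =>
    intro hz
    obtain ⟨F₁, hF₁, hP₁, hI₁⟩ := ih₁ hz.1
    obtain ⟨F₂, hF₂, hP₂, hI₂⟩ := ih₂ hz.2
    exact ⟨F₁ ∪ F₂, hF₁.union hF₂, fun U hU => hU.elim (hP₁ U) (hP₂ U),
      fun y hy => ⟨hI₁ y fun U hU => hy U (Or.inl hU), hI₂ y fun U hU => hy U (Or.inr hU)⟩⟩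
  | sUnion S hS ih =>
    intro hz
    obtain ⟨O, hOS, hzO⟩ := hz
    obtain ⟨F, h1, h2, h3⟩ := ih O hOS hzO
    exact ⟨F, h1, h2, fun y hy => ⟨O, hOS, h3 y hy⟩⟩

/-- A transfinite-sequentially closed set is closed under "specialization". -/
lemma prConst {B : Set (PRSpace X)} (hB : TransSeqClosed B) {y : PRSpace X} (hy : y ∈ B)
    (z : PRSpace X) (hspec : ∀ U, IsOpen U → U ∈ z.zs → U ∈ y.zs) : z ∈ B := by
  refine hB Ordinal.omega0 le_rfl (fun _ => y) (fun _ => hy) z ?_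
  rw [tendsto_nhds]
  intro O hO hzO
  obtain ⟨F, _, hFprop, hFsub⟩ := prBasis hO z hzO
  exact Eventually.of_forall fun _ => hFsub y fun U hU => hspec U (hFprop U hU).1 (hFprop U hU).2

/-- Main lemma: if every finite cylinder around `(T, x₀)` (with `T` consisting of open sets)
meets `B` and `B` is transfinite-sequentially closed, then `(T, x₀) ∈ B`. -/
lemma prMain {B : Set (PRSpace X)} (hB : TransSeqClosed B) :
    ∀ (c : Cardinal.{u}) (T : Set (Set X)), #T = c → (∀ U ∈ T, IsOpen U) →
      (∀ F : Set (Set X), F ⊆ T → F.Finite → ∃ y ∈ B, ∀ U ∈ F, U ∈ y.zs) →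
      ∀ x₀ : X, PRSpace.mk T x₀ ∈ B := by
  intro c
  induction c using WellFoundedLT.induction with
  | _ c IH =>
  intro T hcard hopen hmeets x₀
  rcases Set.finite_or_infinite T with hfin | hinf
  · -- finite case: a single point of `B` lies in every neighborhood of `(T, x₀)`
    obtain ⟨y, hyB, hy⟩ := hmeets T subset_rfl hfin
    exact prConst hB hyB _ fun U _ hU => hy U hU
  · -- infinite case
    have hc : Cardinal.aleph0 ≤ c := by
      rw [← hcard, ← Cardinal.infinite_iff, Set.infinite_coe_iff]
      exact hinf
    set o : Ordinal.{u} := c.ord with ho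
    have homega : Ordinal.omega0 ≤ o := by
      rw [ho, ← Cardinal.ord_aleph0]
      exact Cardinal.ord_le_ord.2 hc
    -- a bijective enumeration of `T` by `o.ToType`
    have hmk : #(o.ToType) = #T := by
      rw [Cardinal.mk_toType, ho, Cardinal.card_ord, hcard]
    obtain ⟨b⟩ := Cardinal.eq.1 hmk
    -- initial segments of the enumeration
    set Tseg : o.ToType → Set (Set X) :=
      fun ξ => Subtype.val '' (b '' Set.Iio ξ) with hTseg
    have hsub : ∀ ξ, Tseg ξ ⊆ T := by
      rintro ξ U ⟨V, ⟨η, _, rfl⟩, rfl⟩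
      exact (b η).2
    have hcardseg : ∀ ξ : o.ToType, #(Tseg ξ) < c := by
      intro ξ
      have h1 : #(Tseg ξ) ≤ #(Set.Iio ξ) :=
        le_trans (Cardinal.mk_image_le) (Cardinal.mk_image_le)
      exact lt_of_le_of_lt h1 (Cardinal.mk_Iio_toType_ord_lt ξ)
    have hmem : ∀ ξ : o.ToType, PRSpace.mk (Tseg ξ) x₀ ∈ B := by
      intro ξ
      exact IH _ (hcardseg ξ) (Tseg ξ) rfl (fun U hU => hopen U (hsub ξ hU))
        (fun F hF hFfin => hmeets F (hF.trans (hsub ξ)) hFfin) x₀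
    have hne : Nonempty o.ToType := by
      rw [Ordinal.toType_nonempty_iff_ne_zero]
      intro h
      rw [h] at homega
      exact Ordinal.omega0_ne_zero (le_antisymm homega (zero_le (a := Ordinal.omega0)))
    refine hB o homega (fun ξ => PRSpace.mk (Tseg ξ) x₀) hmem (PRSpace.mk T x₀) ?_
    rw [tendsto_nhds]
    intro O hO hzO
    obtain ⟨F, hFfin, hFprop, hFsub⟩ := prBasis hO _ hzO
    -- `F` is a finite subset of `T`; find a stage past which the segments cover `F`
    have hFT : ∀ U ∈ F, U ∈ T := fun U hU => (hFprop U hU).2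
    -- index of each element of F
    have hbound : ∃ ξ₀ : o.ToType, ∀ U (hU : U ∈ F), b.symm ⟨U, hFT U hU⟩ < ξ₀ := by
      -- the finite set of indices, as ordinals
      have hlim : Order.IsSuccLimit o := Cardinal.isSuccLimit_ord hc
      set idxs : Set Ordinal.{u} :=
        (fun U : F => ((Ordinal.ToType.mk (o := o)).symm (b.symm ⟨U.1, hFT U.1 U.2⟩)).1) ''
          Set.univ with hidxs
      have hfinidx : idxs.Finite := by
        have : Finite F := hFfin.to_subtype
        exact Set.toFinite _
      have hlt : ∀ v ∈ idxs, v < o := by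
        rintro v ⟨U, _, rfl⟩
        exact ((Ordinal.ToType.mk (o := o)).symm (b.symm ⟨U.1, hFT U.1 U.2⟩)).2
      -- a strict bound below o
      have key : ∀ s : Set Ordinal.{u}, s.Finite → (∀ v ∈ s, v < o) →
          ∃ β, β < o ∧ ∀ v ∈ s, v < β := by
        intro s hs
        refine Set.Finite.induction_on s hs
          (fun _ => ⟨1, lt_of_lt_of_le Ordinal.one_lt_omega0 homega, by simp⟩) ?_
        intro a s ha hs ihs hall
        obtain ⟨β, hβo, hβ⟩ := ihs fun v hv => hall v (Set.mem_insert_of_mem a hv)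
        have hao : a < o := hall a (Set.mem_insert a s)
        refine ⟨max (a + 1) β, max_lt ?_ hβo, ?_⟩
        · rw [Ordinal.add_one_eq_succ]
          exact hlim.succ_lt hao
        · rintro v (rfl | hv)
          · exact lt_of_lt_of_le (lt_of_lt_of_le (Order.lt_succ v)
              (le_of_eq (Ordinal.add_one_eq_succ v).symm)) (le_max_left _ _)
          · exact lt_of_lt_of_le (hβ v hv) (le_max_right _ _)
      obtain ⟨β, hβo, hβ⟩ := key idxs hfinidx hlt
      refine ⟨(Ordinal.ToType.mk (o := o)) ⟨β, hβo⟩, ?_⟩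
      intro U hU
      have h1 : ((Ordinal.ToType.mk (o := o)).symm (b.symm ⟨U, hFT U hU⟩)).1 < β :=
        hβ _ ⟨⟨U, hU⟩, Set.mem_univ _, rfl⟩
      have h2 : (Ordinal.ToType.mk (o := o)).symm (b.symm ⟨U, hFT U hU⟩) <
          (Ordinal.ToType.mk (o := o)).symm ((Ordinal.ToType.mk (o := o)) ⟨β, hβo⟩) := by
        rw [OrderIso.symm_apply_apply]
        exact Subtype.coe_lt_coe.1 h1
      exact ((Ordinal.ToType.mk (o := o)).symm.lt_iff_lt).1 h2
    obtain ⟨ξ₀, hξ₀⟩ := hbound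
    rw [Filter.mem_atTop_sets]
    refine ⟨ξ₀, fun ξ hξ => ?_⟩
    refine hFsub _ fun U hU => ?_
    refine ⟨b (b.symm ⟨U, hFT U hU⟩), ⟨b.symm ⟨U, hFT U hU⟩, lt_of_lt_of_le (hξ₀ U hU) hξ, rfl⟩, ?_⟩
    rw [Equiv.apply_symm_apply]

theorem prPseudoradial : IsPseudoradial (PRSpace X) := by
  intro B hB
  rw [← closure_subset_iff_isClosed]
  intro z hz
  set T : Set (Set X) := {U | IsOpen U ∧ U ∈ z.zs} with hT
  have hTopen : ∀ U ∈ T, IsOpen U := fun U hU => hU.1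
  have hmeets : ∀ F : Set (Set X), F ⊆ T → F.Finite → ∃ y ∈ B, ∀ U ∈ F, U ∈ y.zs := by
    intro F hFT hFfin
    have hOeq : {y : PRSpace X | ∀ U ∈ F, U ∈ y.zs} = ⋂ U ∈ F, {y : PRSpace X | U ∈ y.zs} := by
      ext y; simp
    have hOopen : IsOpen {y : PRSpace X | ∀ U ∈ F, U ∈ y.zs} := by
      rw [hOeq]
      exact hFfin.isOpen_biInter fun U hU => isOpen_cyl (hFT hU).1
    have hzO : z ∈ {y : PRSpace X | ∀ U ∈ F, U ∈ y.zs} := fun U hU => (hFT hU).2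
    obtain ⟨y, hy⟩ := mem_closure_iff.1 hz _ hOopen hzO
    exact ⟨y, hy.2, hy.1⟩
  have h1 : PRSpace.mk T z.pt ∈ B := prMain hB (#T) T rfl hTopen hmeets z.pt
  exact prConst hB h1 z fun U hU hz' => ⟨hU, hz'⟩

/-- The embedding of `X`. -/
def prE : X → PRSpace X := fun x => ⟨{U : Set X | x ∈ U}, x⟩

theorem prEmbedding : Topology.IsEmbedding (prE : X → PRSpace X) := by
  refine ⟨⟨?_⟩, fun a b hab => congrArg PRSpace.pt hab⟩
  show ‹TopologicalSpace X› = TopologicalSpace.induced prE (TopologicalSpace.generateFrom (prGens X))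
  rw [induced_generateFrom_eq]
  have himg : Set.preimage (prE : X → PRSpace X) '' prGens X = {s : Set X | IsOpen s} := by
    ext S
    constructor
    · rintro ⟨O, ⟨U, hU, rfl⟩, rfl⟩
      exact hU
    · intro hS
      exact ⟨{y : PRSpace X | S ∈ y.zs}, ⟨S, hS, rfl⟩, rfl⟩
  rw [himg, TopologicalSpace.generateFrom_setOf_isOpen]

end PRConstruction

/-- Every topological space embeds in a pseudoradial space. -/
theorem embeds_in_pseudoradial (X : Type u) [TopologicalSpace X] :
    ∃ (Y : Type u) (tY : TopologicalSpace Y), @IsPseudoradial Y tY ∧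
      ∃ e : X → Y, @Topology.IsEmbedding X Y _ tY e :=
  ⟨PRSpace X, prTop, prPseudoradial, prE, prEmbedding⟩
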